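/- Let X be a pointed metric space. A subset of Lip₀(X) is bounded with respect to the topology τ_γ if and only if it is bounded in the Lipschitz norm. -/

import Mathlib

open Filter Topology Set Pointwise

set_option linter.unusedSectionVars false
set_option linter.unusedVariables false

noncomputable section

namespace LipApprox

variable (X : Type*) [MetricSpace X] (x₀ : X)
variable (F : Type*) [NormedAddCommGroup F] [NormedSpace ℝ F]

/-- The Lipschitz maps `X → F` vanishing at the base point, as a submodule of `X → F`. -/
def lip0Submodule : Submodule ℝ (X → F) where
  carrier := {f | (∃ K, LipschitzWith K f) ∧ f x₀ = 0}
  add_mem' := by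
    rintro f g ⟨⟨Kf, hf⟩, hf0⟩ ⟨⟨Kg, hg⟩, hg0⟩
    exact ⟨⟨Kf + Kg, hf.add hg⟩, by simp [hf0, hg0]⟩
  zero_mem' := ⟨⟨0, LipschitzWith.const 0⟩, rfl⟩
  smul_mem' := by
    rintro c f ⟨⟨K, hf⟩, hf0⟩
    exact ⟨⟨‖c‖₊ * K, (lipschitzWith_smul c).comp hf⟩, by simp [hf0]⟩

/-- The space `Lip₀(X, F)` of Lipschitz maps from `X` to `F` vanishing at the base point. -/
def lip0 : Type _ := ↥(lip0Submodule X x₀ F)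

instance : AddCommGroup (lip0 X x₀ F) :=
  inferInstanceAs (AddCommGroup ↥(lip0Submodule X x₀ F))

instance : Module ℝ (lip0 X x₀ F) :=
  inferInstanceAs (Module ℝ ↥(lip0Submodule X x₀ F))

variable {X x₀ F}

/-- The underlying function of an element of `Lip₀(X, F)`. -/
def toFun' (f : lip0 X x₀ F) : X → F := f.1

lemma exists_lip (f : lip0 X x₀ F) : ∃ K, LipschitzWith K (toFun' f) := f.2.1

lemma apply_base (f : lip0 X x₀ F) : toFun' f x₀ = 0 := f.2.2

lemma toFun'_add (f g : lip0 X x₀ F) : toFun' (f + g) = toFun' f + toFun' g := rfl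
lemma toFun'_neg (f : lip0 X x₀ F) : toFun' (-f) = -toFun' f := rfl
lemma toFun'_smul (c : ℝ) (f : lip0 X x₀ F) : toFun' (c • f) = c • toFun' f := rfl
lemma toFun'_zero : toFun' (0 : lip0 X x₀ F) = 0 := rfl

variable (X x₀ F) in
/-- The Lipschitz norm of an element of `Lip₀(X, F)`. -/
def lipNorm (f : lip0 X x₀ F) : ℝ :=
  ⨆ p : X × X, ‖toFun' f p.1 - toFun' f p.2‖ / dist p.1 p.2

lemma ratio_le (f : lip0 X x₀ F) {K : NNReal} (hK : LipschitzWith K (toFun' f))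
    (p : X × X) : ‖toFun' f p.1 - toFun' f p.2‖ / dist p.1 p.2 ≤ K := by
  rcases eq_or_ne p.1 p.2 with h | h
  · simp [h]
  · rw [div_le_iff₀ (dist_pos.2 h), ← dist_eq_norm]
    exact hK.dist_le_mul p.1 p.2

lemma bddAbove_ratio (f : lip0 X x₀ F) :
    BddAbove (Set.range fun p : X × X =>
      ‖toFun' f p.1 - toFun' f p.2‖ / dist p.1 p.2) := by
  obtain ⟨K, hK⟩ := exists_lip f
  exact ⟨K, by rintro r ⟨p, rfl⟩; exact ratio_le f hK p⟩

lemma nonempty_pairs (x₀ : X) : Nonempty (X × X) := ⟨(x₀, x₀)⟩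

lemma ratio_le_lipNorm (f : lip0 X x₀ F) (p : X × X) :
    ‖toFun' f p.1 - toFun' f p.2‖ / dist p.1 p.2 ≤ lipNorm X x₀ F f :=
  le_ciSup (bddAbove_ratio f) p

lemma lipNorm_nonneg (f : lip0 X x₀ F) : 0 ≤ lipNorm X x₀ F f := by
  have := ratio_le_lipNorm (x₀ := x₀) f (x₀, x₀)
  simpa using this

lemma norm_sub_le_lipNorm (f : lip0 X x₀ F) (x y : X) :
    ‖toFun' f x - toFun' f y‖ ≤ lipNorm X x₀ F f * dist x y := by
  rcases eq_or_ne x y with rfl | h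
  · simp
  · have := ratio_le_lipNorm (x₀ := x₀) f (x, y)
    rw [div_le_iff₀ (dist_pos.2 h)] at this
    simpa using this

instance : NormedAddCommGroup (lip0 X x₀ F) :=
  AddGroupNorm.toNormedAddCommGroup
    { toFun := lipNorm X x₀ F
      map_zero' := by
        haveI : Nonempty (X × X) := nonempty_pairs x₀
        have h0 : ∀ p : X × X,
            ‖toFun' (0 : lip0 X x₀ F) p.1 - toFun' (0 : lip0 X x₀ F) p.2‖ /
              dist p.1 p.2 = 0 := by
          intro p; rw [toFun'_zero]; simp
        simp only [lipNorm, h0, ciSup_const]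
      add_le' := by
        intro f g
        haveI : Nonempty (X × X) := nonempty_pairs x₀
        apply ciSup_le
        intro p
        rcases eq_or_ne p.1 p.2 with h | h
        · simp only [h, dist_self, div_zero]
          exact add_nonneg (lipNorm_nonneg f) (lipNorm_nonneg g)
        · have hnum : ‖toFun' (f + g) p.1 - toFun' (f + g) p.2‖ ≤
              ‖toFun' f p.1 - toFun' f p.2‖ + ‖toFun' g p.1 - toFun' g p.2‖ := by
            rw [toFun'_add, Pi.add_apply, Pi.add_apply, add_sub_add_comm]
            exact norm_add_le _ _
          calc ‖toFun' (f + g) p.1 - toFun' (f + g) p.2‖ / dist p.1 p.2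
              ≤ (‖toFun' f p.1 - toFun' f p.2‖ +
                  ‖toFun' g p.1 - toFun' g p.2‖) / dist p.1 p.2 := by gcongr
            _ = ‖toFun' f p.1 - toFun' f p.2‖ / dist p.1 p.2 +
                  ‖toFun' g p.1 - toFun' g p.2‖ / dist p.1 p.2 := add_div _ _ _
            _ ≤ lipNorm X x₀ F f + lipNorm X x₀ F g :=
                add_le_add (ratio_le_lipNorm f p) (ratio_le_lipNorm g p)
      neg' := by
        intro f
        simp only [lipNorm]
        congr 1
        funext p
        congr 1
        rw [toFun'_neg, Pi.neg_apply, Pi.neg_apply, neg_sub_neg, norm_sub_rev]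
      eq_zero_of_map_eq_zero' := by
        intro f hf
        have hzero : ∀ x : X, toFun' f x = 0 := by
          intro x
          rcases eq_or_ne x x₀ with h | h
          · rw [h]; exact apply_base f
          · have hf' : lipNorm X x₀ F f = 0 := hf
            have h1 := ratio_le_lipNorm (x₀ := x₀) f (x, x₀)
            rw [hf', div_le_iff₀ (dist_pos.2 h), zero_mul] at h1
            have h2 : toFun' f x - toFun' f x₀ = 0 := by
              simpa using norm_le_zero_iff.1 h1
            have h3 := apply_base f
            rw [h3, sub_zero] at h2
            exact h2
        exact Subtype.ext (funext hzero) }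

lemma lip0_norm_def (f : lip0 X x₀ F) : ‖f‖ = lipNorm X x₀ F f := rfl

instance : NormedSpace ℝ (lip0 X x₀ F) where
  norm_smul_le c f := by
    haveI : Nonempty (X × X) := nonempty_pairs x₀
    rw [lip0_norm_def, lip0_norm_def, lipNorm]
    apply ciSup_le
    intro p
    have h1 : toFun' (c • f) p.1 - toFun' (c • f) p.2 =
        c • (toFun' f p.1 - toFun' f p.2) := by
      rw [toFun'_smul, Pi.smul_apply, Pi.smul_apply, smul_sub]
    rw [h1, norm_smul]
    rcases eq_or_ne p.1 p.2 with h | h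
    · simp only [h, dist_self, div_zero]
      exact mul_nonneg (norm_nonneg c) (lipNorm_nonneg f)
    · rw [mul_div_assoc]
      exact mul_le_mul_of_nonneg_left (ratio_le_lipNorm (x₀ := x₀) f p) (norm_nonneg c)

variable (X x₀ F)

/-- Elements of `Lip₀(X, F)` as continuous maps. -/
def toCM (f : lip0 X x₀ F) : C(X, F) :=
  ⟨toFun' f, by
    obtain ⟨K, hK⟩ := exists_lip f
    exact hK.continuous⟩

/-- The compact-open topology `τ₀` on `Lip₀(X, F)`. -/
def tau0 : TopologicalSpace (lip0 X x₀ F) :=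
  TopologicalSpace.induced (toCM X x₀ F) ContinuousMap.compactOpen

/-- The set `γ(U) = ⋃ₙ (U₀ ∩ B + U₁ ∩ 2B + ⋯ + Uₙ ∩ 2ⁿB)` from the definition of the
mixed topology, where `B` is the closed unit ball of `Lip₀(X, F)`. -/
def gammaSet (U : ℕ → Set (lip0 X x₀ F)) : Set (lip0 X x₀ F) :=
  ⋃ n : ℕ, ∑ i ∈ Finset.range (n + 1), (U i ∩ {f | ‖f‖ ≤ 2 ^ i})

/-- The mixed topology `τ_γ = γ[Lip, τ₀]` on `Lip₀(X, F)`: the topology whose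
neighborhoods of a point `f` are generated by the translates by `f` of the sets `γ(U)`,
where `U` runs over all sequences of convex balanced `τ₀`-neighborhoods of zero. -/
def tauGamma : TopologicalSpace (lip0 X x₀ F) :=
  TopologicalSpace.mkOfNhds fun f =>
    ⨅ (U : ℕ → Set (lip0 X x₀ F))
      (_ : ∀ n, U n ∈ @nhds _ (tau0 X x₀ F) 0 ∧ Convex ℝ (U n) ∧ Balanced ℝ (U n)),
      Filter.principal ((f + ·) '' gammaSet X x₀ F U)

/-- A subset of `Lip₀(X, F)` is norm bounded if the Lipschitz norms of its members are
uniformly bounded. -/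
def NormBounded (B : Set (lip0 X x₀ F)) : Prop :=
  ∃ C : ℝ, ∀ f ∈ B, ‖f‖ ≤ C

/-- The locally convex topology `γτ_γ` on `Lip₀(X, F)`, generated by the seminorms
`f ↦ sup_n αₙ ‖f xₙ - f yₙ‖ / d(xₙ, yₙ)` where `(αₙ)` is a sequence of positive reals
tending to zero and `((xₙ, yₙ))` is a sequence of pairs of distinct points of `X`. -/
def gammaTauGamma : TopologicalSpace (lip0 X x₀ F) :=
  ⨅ (α : ℕ → ℝ) (z : ℕ → X × X)
    (_ : (∀ n, 0 < α n) ∧ Filter.Tendsto α Filter.atTop (nhds 0) ∧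
      ∀ n, (z n).1 ≠ (z n).2),
    TopologicalSpace.induced
      (fun f => UniformFun.ofFun fun n =>
        (α n / dist (z n).1 (z n).2) • (toFun' f (z n).1 - toFun' f (z n).2))
      inferInstance

/-- Evaluation at a point of `X`, as a linear functional on `Lip₀(X)`. -/
def evalLM (x : X) : lip0 X x₀ ℝ →ₗ[ℝ] ℝ where
  toFun f := toFun' f x
  map_add' f g := rfl
  map_smul' c f := rfl

/-- Evaluation at a point of `X`, as a continuous linear functional on `Lip₀(X)`. -/
def evalCLM (x : X) : lip0 X x₀ ℝ →L[ℝ] ℝ :=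
  LinearMap.mkContinuous (evalLM X x₀ x) (dist x x₀)
    (fun f => by
      have h0 : toFun' f x₀ = 0 := apply_base f
      have h := norm_sub_le_lipNorm (x₀ := x₀) f x x₀
      rw [h0, sub_zero] at h
      calc ‖evalLM X x₀ x f‖ ≤ lipNorm X x₀ ℝ f * dist x x₀ := h
        _ = dist x x₀ * ‖f‖ := by rw [lip0_norm_def, mul_comm])

/-- The Lipschitz-free space `F(X)`: the closed linear span of the evaluation
functionals inside the dual of `Lip₀(X)`. -/
def freeSpace : Submodule ℝ (lip0 X x₀ ℝ →L[ℝ] ℝ) :=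
  (Submodule.span ℝ (Set.range (evalCLM X x₀))).topologicalClosure

/-- The Dirac map `δ : X → F(X)`. -/
def deltaF (x : X) : freeSpace X x₀ :=
  ⟨evalCLM X x₀ x,
    Submodule.le_topologicalClosure _ (Submodule.subset_span (Set.mem_range_self x))⟩

/-- For a normed space `G`, the topology on the dual `G'` of uniform convergence on the
convex balanced compact subsets of `G` (the topology of `G'_c`). -/
def dualcTop (G : Type*) [NormedAddCommGroup G] [NormedSpace ℝ G] :
    TopologicalSpace (G →L[ℝ] ℝ) :=
  TopologicalSpace.induced
    (fun φ => UniformOnFun.ofFun {L : Set G | IsCompact L ∧ Convex ℝ L ∧ Balanced ℝ L} ⇑φ)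
    inferInstance

/-! ### Auxiliary material for `stmt3` -/

section Stmt3Aux

variable {X : Type*} [MetricSpace X] {x₀ : X}

/-- Admissible sequences of neighborhoods of zero. -/
def Adm (U : ℕ → Set (lip0 X x₀ ℝ)) : Prop :=
  ∀ n, U n ∈ @nhds _ (tau0 X x₀ ℝ) 0 ∧ Convex ℝ (U n) ∧ Balanced ℝ (U n)

/-- The neighborhood filter function used in the definition of `tauGamma`. -/
def nFun (f : lip0 X x₀ ℝ) : Filter (lip0 X x₀ ℝ) :=
  ⨅ (U : ℕ → Set (lip0 X x₀ ℝ)) (_ : Adm U), 𝓟 ((f + ·) '' gammaSet X x₀ ℝ U)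

lemma tauGamma_eq_mk (X : Type*) [MetricSpace X] (x₀ : X) :
    tauGamma X x₀ ℝ = TopologicalSpace.mkOfNhds (nFun (X := X) (x₀ := x₀)) := rfl

lemma sum_sets_mono {A B : ℕ → Set (lip0 X x₀ ℝ)} (h : ∀ i, A i ⊆ B i) (s : Finset ℕ) :
    (∑ i ∈ s, A i) ⊆ ∑ i ∈ s, B i := by
  classical
  induction s using Finset.induction_on with
  | empty => simp
  | insert a s hx ih =>
    rw [Finset.sum_insert hx, Finset.sum_insert hx]
    exact Set.add_subset_add (h _) ih

lemma gammaSet_mono {U V : ℕ → Set (lip0 X x₀ ℝ)} (h : ∀ n, U n ⊆ V n) :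
    gammaSet X x₀ ℝ U ⊆ gammaSet X x₀ ℝ V :=
  Set.iUnion_mono fun _ =>
    sum_sets_mono (fun i => Set.inter_subset_inter_left _ (h i)) _

lemma image_zero_add (S : Set (lip0 X x₀ ℝ)) :
    (((0 : lip0 X x₀ ℝ)) + ·) '' S = S := by
  simp only [zero_add, Set.image_id']

lemma exists_adm_of_mem_nhds {V : Set (lip0 X x₀ ℝ)}
    (hV : V ∈ @nhds _ (tauGamma X x₀ ℝ) 0) :
    ∃ U, Adm U ∧ gammaSet X x₀ ℝ U ⊆ V := by
  letI := tauGamma X x₀ ℝ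
  obtain ⟨s, hsV, hso, hs0⟩ := mem_nhds_iff.1 hV
  have hs : s ∈ nFun (X := X) (x₀ := x₀) 0 := by
    have h' : IsOpen[TopologicalSpace.mkOfNhds (nFun (X := X) (x₀ := x₀))] s :=
      tauGamma_eq_mk X x₀ ▸ hso
    exact h' 0 hs0
  haveI : Nonempty {U : ℕ → Set (lip0 X x₀ ℝ) // Adm U} :=
    ⟨⟨fun _ => Set.univ, fun _ => ⟨Filter.univ_mem, convex_univ, balanced_univ⟩⟩⟩
  have hdir : Directed (· ≥ ·) fun U : {U : ℕ → Set (lip0 X x₀ ℝ) // Adm U} =>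
      (𝓟 ((((0 : lip0 X x₀ ℝ)) + ·) '' gammaSet X x₀ ℝ U.1) : Filter _) := by
    rintro ⟨U, hU⟩ ⟨W, hW⟩
    refine ⟨⟨fun n => U n ∩ W n, fun n => ⟨Filter.inter_mem (hU n).1 (hW n).1,
      (hU n).2.1.inter (hW n).2.1, (hU n).2.2.inter (hW n).2.2⟩⟩, ?_, ?_⟩
    · exact Filter.principal_mono.2 (Set.image_mono
        (gammaSet_mono fun n => Set.inter_subset_left))
    · exact Filter.principal_mono.2 (Set.image_mono
        (gammaSet_mono fun n => Set.inter_subset_right))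
  rw [nFun, iInf_subtype'] at hs
  rw [Filter.mem_iInf_of_directed hdir] at hs
  obtain ⟨⟨U, hU⟩, hsU⟩ := hs
  rw [Filter.mem_principal, image_zero_add] at hsU
  exact ⟨U, hU, hsU.trans hsV⟩

lemma isOpen_tauGamma_of {V : Set (lip0 X x₀ ℝ)}
    (h : ∀ g ∈ V, ∃ U, Adm U ∧ ∀ f ∈ gammaSet X x₀ ℝ U, g + f ∈ V) :
    IsOpen[tauGamma X x₀ ℝ] V := by
  rw [tauGamma_eq_mk]
  intro g hg
  obtain ⟨U, hU, hsub⟩ := h g hg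
  have hle : nFun (X := X) (x₀ := x₀) g ≤ 𝓟 ((g + ·) '' gammaSet X x₀ ℝ U) :=
    iInf_le_of_le U (iInf_le _ hU)
  exact hle (by
    rw [Filter.mem_principal]
    rintro _ ⟨f, hf, rfl⟩
    exact hsub f hf)

lemma continuous_eval_tau0 (x : X) :
    @Continuous _ _ (tau0 X x₀ ℝ) _ (fun f : lip0 X x₀ ℝ => toFun' f x) := by
  letI := tau0 X x₀ ℝ
  have h1 : Continuous (toCM X x₀ ℝ) := continuous_induced_dom
  exact (continuous_eval_const x).comp h1

/-- A basic open set for `tau0`. -/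
def qset (x₀ : X) (x y : X) (r : ℝ) : Set (lip0 X x₀ ℝ) :=
  {h | ‖toFun' h x - toFun' h y‖ < r}

lemma isOpen_qset (x y : X) (r : ℝ) : IsOpen[tau0 X x₀ ℝ] (qset x₀ x y r) := by
  letI := tau0 X x₀ ℝ
  have hc : Continuous fun h : lip0 X x₀ ℝ => ‖toFun' h x - toFun' h y‖ :=
    ((continuous_eval_tau0 x).sub (continuous_eval_tau0 y)).norm
  exact isOpen_Iio.preimage hc

lemma delta_smul (c : ℝ) (h : lip0 X x₀ ℝ) (x y : X) :
    toFun' (c • h) x - toFun' (c • h) y = c • (toFun' h x - toFun' h y) := by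
  rw [toFun'_smul, Pi.smul_apply, Pi.smul_apply, smul_sub]

lemma delta_add (g h : lip0 X x₀ ℝ) (x y : X) :
    toFun' (g + h) x - toFun' (g + h) y
      = (toFun' g x - toFun' g y) + (toFun' h x - toFun' h y) := by
  rw [toFun'_add, Pi.add_apply, Pi.add_apply, add_sub_add_comm]

lemma convex_qset (x y : X) (r : ℝ) : Convex ℝ (qset x₀ x y r) := by
  intro h₁ m₁ h₂ m₂ a b ha hb hab
  have key : a * ‖toFun' h₁ x - toFun' h₁ y‖ + b * ‖toFun' h₂ x - toFun' h₂ y‖ < r := by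
    have := (convex_Iio r) m₁ m₂ ha hb hab
    simpa [smul_eq_mul] using this
  have heq : toFun' (a • h₁ + b • h₂) x - toFun' (a • h₁ + b • h₂) y
      = a • (toFun' h₁ x - toFun' h₁ y) + b • (toFun' h₂ x - toFun' h₂ y) := by
    rw [delta_add, delta_smul, delta_smul]
  show ‖toFun' (a • h₁ + b • h₂) x - toFun' (a • h₁ + b • h₂) y‖ < r
  calc ‖toFun' (a • h₁ + b • h₂) x - toFun' (a • h₁ + b • h₂) y‖
      ≤ ‖a • (toFun' h₁ x - toFun' h₁ y)‖ + ‖b • (toFun' h₂ x - toFun' h₂ y)‖ := by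
        rw [heq]; exact norm_add_le _ _
    _ = a * ‖toFun' h₁ x - toFun' h₁ y‖ + b * ‖toFun' h₂ x - toFun' h₂ y‖ := by
        rw [norm_smul, norm_smul, Real.norm_of_nonneg ha, Real.norm_of_nonneg hb]
    _ < r := key

lemma balanced_qset (x y : X) (r : ℝ) : Balanced ℝ (qset x₀ x y r) := by
  intro a ha
  rw [Set.smul_set_subset_iff]
  intro h hh
  show ‖toFun' (a • h) x - toFun' (a • h) y‖ < r
  rw [delta_smul, norm_smul]
  exact lt_of_le_of_lt (mul_le_of_le_one_left (norm_nonneg _) ha) hh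

section Pfun

variable (z : ℕ → X × X)

/-- One term of the seminorm used to detect unboundedness. -/
def pterm (k : ℕ) (g : lip0 X x₀ ℝ) : ℝ :=
  (1 / ((k : ℝ) + 1)) * (‖toFun' g (z k).1 - toFun' g (z k).2‖ / dist (z k).1 (z k).2)

/-- The seminorm used to detect unboundedness. -/
def pfun (g : lip0 X x₀ ℝ) : ℝ := ⨆ k, pterm z k g

lemma pterm_nonneg (k : ℕ) (g : lip0 X x₀ ℝ) : 0 ≤ pterm z k g :=
  mul_nonneg (by positivity) (div_nonneg (norm_nonneg _) dist_nonneg)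

lemma pterm_le_norm (k : ℕ) (g : lip0 X x₀ ℝ) : pterm z k g ≤ ‖g‖ := by
  have h1 : ‖toFun' g (z k).1 - toFun' g (z k).2‖ / dist (z k).1 (z k).2 ≤ ‖g‖ := by
    rw [lip0_norm_def]
    exact ratio_le_lipNorm g (z k)
  have h0 : (0:ℝ) ≤ ‖toFun' g (z k).1 - toFun' g (z k).2‖ / dist (z k).1 (z k).2 :=
    div_nonneg (norm_nonneg _) dist_nonneg
  have h2 : 1 / ((k:ℝ) + 1) ≤ 1 := by
    rw [div_le_one (by positivity)]
    have : (0:ℝ) ≤ (k:ℝ) := Nat.cast_nonneg k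
    linarith
  calc pterm z k g ≤ 1 * (‖toFun' g (z k).1 - toFun' g (z k).2‖ / dist (z k).1 (z k).2) :=
        mul_le_mul_of_nonneg_right h2 h0
    _ ≤ ‖g‖ := by rw [one_mul]; exact h1

lemma bddAbove_pterm (g : lip0 X x₀ ℝ) : BddAbove (Set.range fun k => pterm z k g) :=
  ⟨‖g‖, by rintro r ⟨k, rfl⟩; exact pterm_le_norm z k g⟩

lemma pterm_le_pfun (k : ℕ) (g : lip0 X x₀ ℝ) : pterm z k g ≤ pfun z g :=
  le_ciSup (bddAbove_pterm z g) k

lemma pfun_nonneg (g : lip0 X x₀ ℝ) : 0 ≤ pfun z g :=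
  le_trans (pterm_nonneg z 0 g) (pterm_le_pfun z 0 g)

lemma pfun_le_norm (g : lip0 X x₀ ℝ) : pfun z g ≤ ‖g‖ :=
  ciSup_le fun k => pterm_le_norm z k g

lemma pfun_zero : pfun z (0 : lip0 X x₀ ℝ) = 0 :=
  le_antisymm (by simpa using pfun_le_norm z 0) (pfun_nonneg z 0)

lemma pterm_add_le (k : ℕ) (g h : lip0 X x₀ ℝ) :
    pterm z k (g + h) ≤ pterm z k g + pterm z k h := by
  have hd : (0:ℝ) ≤ (dist (z k).1 (z k).2)⁻¹ := inv_nonneg.2 dist_nonneg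
  have h1 : ‖toFun' (g + h) (z k).1 - toFun' (g + h) (z k).2‖ ≤
      ‖toFun' g (z k).1 - toFun' g (z k).2‖ + ‖toFun' h (z k).1 - toFun' h (z k).2‖ := by
    rw [delta_add]; exact norm_add_le _ _
  have h2 : ‖toFun' (g + h) (z k).1 - toFun' (g + h) (z k).2‖ / dist (z k).1 (z k).2 ≤
      (‖toFun' g (z k).1 - toFun' g (z k).2‖ + ‖toFun' h (z k).1 - toFun' h (z k).2‖) /
        dist (z k).1 (z k).2 := by
    rw [div_eq_mul_inv, div_eq_mul_inv]
    exact mul_le_mul_of_nonneg_right h1 hd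
  unfold pterm
  calc (1 / ((k : ℝ) + 1)) *
        (‖toFun' (g + h) (z k).1 - toFun' (g + h) (z k).2‖ / dist (z k).1 (z k).2)
      ≤ (1 / ((k : ℝ) + 1)) *
        ((‖toFun' g (z k).1 - toFun' g (z k).2‖ + ‖toFun' h (z k).1 - toFun' h (z k).2‖) /
          dist (z k).1 (z k).2) := mul_le_mul_of_nonneg_left h2 (by positivity)
    _ = (1 / ((k : ℝ) + 1)) *
          (‖toFun' g (z k).1 - toFun' g (z k).2‖ / dist (z k).1 (z k).2) +
        (1 / ((k : ℝ) + 1)) *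
          (‖toFun' h (z k).1 - toFun' h (z k).2‖ / dist (z k).1 (z k).2) := by
        rw [add_div, mul_add]

lemma pfun_add_le (g h : lip0 X x₀ ℝ) : pfun z (g + h) ≤ pfun z g + pfun z h :=
  ciSup_le fun k => (pterm_add_le z k g h).trans
    (add_le_add (pterm_le_pfun z k g) (pterm_le_pfun z k h))

lemma pterm_smul (c : ℝ) (k : ℕ) (g : lip0 X x₀ ℝ) :
    pterm z k (c • g) = ‖c‖ * pterm z k g := by
  unfold pterm
  rw [delta_smul, norm_smul, mul_div_assoc]
  ring

lemma pfun_smul_le (c : ℝ) (g : lip0 X x₀ ℝ) : pfun z (c • g) ≤ ‖c‖ * pfun z g :=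
  ciSup_le fun k => by
    rw [pterm_smul]
    exact mul_le_mul_of_nonneg_left (pterm_le_pfun z k g) (norm_nonneg c)

end Pfun

end Stmt3Aux

section Stmt3Main

variable {X : Type*} [MetricSpace X] {x₀ : X}

lemma key_open (z : ℕ → X × X) (hz : ∀ k, 0 < dist (z k).1 (z k).2) :
    IsOpen[tauGamma X x₀ ℝ] {g : lip0 X x₀ ℝ | pfun z g < 1} := by
  apply isOpen_tauGamma_of
  intro g hg
  have hg' : pfun z g < 1 := hg
  set ε : ℝ := 1 - pfun z g with hε
  have hεpos : 0 < ε := by rw [hε]; linarith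
  set t : ℕ → ℝ := fun i => ε / 2 ^ (i + 2) with ht
  have htpos : ∀ i, 0 < t i := fun i => div_pos hεpos (by positivity)
  set N : ℕ → ℕ := fun i => ⌈(2:ℝ) ^ i / t i⌉₊ with hN
  set U : ℕ → Set (lip0 X x₀ ℝ) := fun i =>
    ⋂ n ∈ Finset.range (N i),
      qset x₀ (z n).1 (z n).2 (t i * (((n:ℝ) + 1) * dist (z n).1 (z n).2)) with hUdef
  have hrpos : ∀ (i n : ℕ), 0 < t i * (((n:ℝ) + 1) * dist (z n).1 (z n).2) := by
    intro i n
    have h1 := hz n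
    have h2 := htpos i
    positivity
  have hAdm : Adm U := by
    intro i
    refine ⟨?_, ?_, ?_⟩
    · letI := tau0 X x₀ ℝ
      have hopen : IsOpen (U i) := isOpen_biInter_finset fun n _ => isOpen_qset _ _ _
      refine hopen.mem_nhds ?_
      simp only [hUdef, Set.mem_iInter]
      intro n _
      show ‖toFun' (0 : lip0 X x₀ ℝ) (z n).1 - toFun' (0 : lip0 X x₀ ℝ) (z n).2‖ < _
      rw [toFun'_zero]
      simpa using hrpos i n
    · exact convex_iInter fun n => convex_iInter fun _ => convex_qset _ _ _
    · rw [balanced_iff_smul_mem]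
      intro a ha f hf
      simp only [hUdef, Set.mem_iInter] at hf ⊢
      intro n hn
      exact (balanced_qset (x₀ := x₀) _ _ _).smul_mem ha (hf n hn)
  refine ⟨U, hAdm, ?_⟩
  have hkey : ∀ i, ∀ h ∈ U i ∩ {f : lip0 X x₀ ℝ | ‖f‖ ≤ 2 ^ i}, pfun z h ≤ t i := by
    intro i h hh
    obtain ⟨hh1, hh2⟩ := hh
    refine ciSup_le fun n => ?_
    rcases lt_or_ge n (N i) with hn | hn
    · have hq : ‖toFun' h (z n).1 - toFun' h (z n).2‖ <
          t i * (((n:ℝ) + 1) * dist (z n).1 (z n).2) := by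
        simp only [hUdef, Set.mem_iInter] at hh1
        exact hh1 n (Finset.mem_range.2 hn)
      have hd := hz n
      have h1 : pterm z n h ≤ (1 / ((n:ℝ) + 1)) *
          ((t i * (((n:ℝ) + 1) * dist (z n).1 (z n).2)) / dist (z n).1 (z n).2) := by
        refine mul_le_mul_of_nonneg_left ?_ (by positivity)
        exact (div_le_div_iff_of_pos_right hd).2 hq.le
      have h2 : (1 / ((n:ℝ) + 1)) *
          ((t i * (((n:ℝ) + 1) * dist (z n).1 (z n).2)) / dist (z n).1 (z n).2) = t i := by
        have hn1 : ((n:ℝ) + 1) ≠ 0 := by positivity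
        field_simp
      exact h1.trans (le_of_eq h2)
    · have hb : pterm z n h ≤ (1 / ((n:ℝ) + 1)) * (2:ℝ) ^ i := by
        refine mul_le_mul_of_nonneg_left ?_ (by positivity)
        refine le_trans ?_ hh2
        rw [lip0_norm_def]
        exact ratio_le_lipNorm h (z n)
      have hn' : (2:ℝ) ^ i / t i ≤ (n:ℝ) + 1 := by
        calc (2:ℝ) ^ i / t i ≤ (N i : ℝ) := Nat.le_ceil _
          _ ≤ (n:ℝ) := Nat.cast_le.2 hn
          _ ≤ (n:ℝ) + 1 := by linarith
      rw [div_le_iff₀ (htpos i)] at hn'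
      have hpos : (0:ℝ) < (n:ℝ) + 1 := by positivity
      have h3 : (1 / ((n:ℝ) + 1)) * (2:ℝ) ^ i ≤ t i := by
        calc (1 / ((n:ℝ) + 1)) * (2:ℝ) ^ i
            ≤ (1 / ((n:ℝ) + 1)) * (((n:ℝ) + 1) * t i) := by
              refine mul_le_mul_of_nonneg_left ?_ (by positivity)
              linarith
          _ = t i := by field_simp
      exact hb.trans h3
  have hsum : ∀ m, ∀ h ∈ (∑ i ∈ Finset.range (m + 1),
      (U i ∩ {f : lip0 X x₀ ℝ | ‖f‖ ≤ 2 ^ i})),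
      pfun z h ≤ ∑ i ∈ Finset.range (m + 1), t i := by
    intro m
    induction m with
    | zero =>
      intro h hh
      rw [Finset.sum_range_one] at hh ⊢
      exact hkey 0 h hh
    | succ m ih =>
      intro h hh
      rw [Finset.sum_range_succ] at hh
      obtain ⟨h₁, hh₁, h₂, hh₂, rfl⟩ := Set.mem_add.1 hh
      rw [Finset.sum_range_succ]
      exact le_trans (pfun_add_le z h₁ h₂) (add_le_add (ih h₁ hh₁) (hkey (m + 1) h₂ hh₂))
  intro f hf
  obtain ⟨m, hm⟩ := Set.mem_iUnion.1 hf
  have h1 : pfun z f ≤ ∑ i ∈ Finset.range (m + 1), t i := hsum m f hm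
  have h2 : (∑ i ∈ Finset.range (m + 1), t i) ≤ ε / 2 := by
    have he : ∀ i, t i = ε / 4 * (1 / 2 : ℝ) ^ i := by
      intro i
      simp only [ht]
      rw [pow_add, div_pow, one_pow]
      ring
    calc (∑ i ∈ Finset.range (m + 1), t i)
        = ε / 4 * ∑ i ∈ Finset.range (m + 1), (1 / 2 : ℝ) ^ i := by
          rw [Finset.mul_sum]
          exact Finset.sum_congr rfl fun i _ => he i
      _ ≤ ε / 4 * 2 := mul_le_mul_of_nonneg_left (sum_geometric_two_le _) (by positivity)
      _ = ε / 2 := by ring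
  show pfun z (g + f) < 1
  have h3 : pfun z (g + f) ≤ pfun z g + pfun z f := pfun_add_le z g f
  have h4 : pfun z g + ε / 2 < 1 := by rw [hε]; linarith
  linarith

lemma tau0_nhds_basis {U : Set (lip0 X x₀ ℝ)} (hU : U ∈ @nhds _ (tau0 X x₀ ℝ) 0) :
    ∃ (K : Set X) (ε : ℝ), IsCompact K ∧ 0 < ε ∧
      {f : lip0 X x₀ ℝ | ∀ x ∈ K, ‖toFun' f x‖ < ε} ⊆ U := by
  letI : TopologicalSpace (lip0 X x₀ ℝ) := tau0 X x₀ ℝ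
  have h : (𝓝 (0 : lip0 X x₀ ℝ)) =
      Filter.comap (toCM X x₀ ℝ) (𝓝 (toCM X x₀ ℝ 0)) := nhds_induced _ _
  rw [h] at hU
  have hb := nhds_basis_uniformity' (x := toCM X x₀ ℝ 0)
    (Filter.HasBasis.compactConvergenceUniformity Metric.uniformity_basis_dist)
  obtain ⟨⟨K, ε⟩, ⟨hK, hε⟩, hsub⟩ := (hb.comap (toCM X x₀ ℝ)).mem_iff.1 hU
  refine ⟨K, ε, hK, hε, fun f hf => hsub ?_⟩
  simp only [Set.mem_preimage, Set.mem_setOf_eq]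
  intro x hx
  have h0 : (toCM X x₀ ℝ 0) x = 0 := by
    show toFun' (0 : lip0 X x₀ ℝ) x = 0
    rw [toFun'_zero]
    rfl
  rw [h0, dist_zero_left]
  exact hf x hx

end Stmt3Main

/-- A subset of `Lip₀(X)` is (von Neumann) bounded with respect to the
topology `τ_γ` iff it is bounded in the Lipschitz norm. -/
theorem stmt3 (X : Type*) [MetricSpace X] (x₀ : X) (B : Set (lip0 X x₀ ℝ)) :
    @Bornology.IsVonNBounded ℝ _ _ _ _ (tauGamma X x₀ ℝ) B ↔ NormBounded X x₀ ℝ B := by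
  haveI : Nonempty (X × X) := nonempty_pairs x₀
  constructor
  · intro hB
    by_contra hnb
    rw [NormBounded] at hnb
    push_neg at hnb
    have hex2 : ∀ k : ℕ, ∃ f ∈ B, ∃ p : X × X,
        ((k:ℝ) + 1) ^ 2 < ‖toFun' f p.1 - toFun' f p.2‖ / dist p.1 p.2 := by
      intro k
      obtain ⟨f, hfB, hf⟩ := hnb (((k:ℝ) + 1) ^ 2)
      refine ⟨f, hfB, ?_⟩
      by_contra hc
      push_neg at hc
      have hle : ‖f‖ ≤ ((k:ℝ) + 1) ^ 2 := by
        rw [lip0_norm_def, lipNorm]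
        exact ciSup_le fun p => hc p
      exact absurd hf (not_lt.2 hle)
    choose f hfB z hz using hex2
    have hzd : ∀ k, 0 < dist (z k).1 (z k).2 := by
      intro k
      rcases lt_or_eq_of_le (dist_nonneg : (0:ℝ) ≤ dist (z k).1 (z k).2) with h | h
      · exact h
      · exfalso
        have h' := hz k
        rw [← h, div_zero] at h'
        have : (0:ℝ) ≤ ((k:ℝ) + 1) ^ 2 := by positivity
        linarith
    have hVopen := key_open (x₀ := x₀) z hzd
    have hV0 : (0 : lip0 X x₀ ℝ) ∈ {g : lip0 X x₀ ℝ | pfun z g < 1} := by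
      show pfun z (0 : lip0 X x₀ ℝ) < 1
      rw [pfun_zero]
      norm_num
    have hVnhds : {g : lip0 X x₀ ℝ | pfun z g < 1} ∈ @nhds _ (tauGamma X x₀ ℝ) 0 := by
      letI := tauGamma X x₀ ℝ
      exact hVopen.mem_nhds hV0
    obtain ⟨r, hr⟩ := absorbs_iff_norm.1 (hB hVnhds)
    set c : ℝ := max r 1 with hc
    have hc1 : (1:ℝ) ≤ c := le_max_right _ _
    have hc0 : (0:ℝ) ≤ c := le_trans zero_le_one hc1
    have hcn : ‖c‖ = c := Real.norm_of_nonneg hc0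
    have hsub := hr c (by rw [hcn]; exact le_max_left _ _)
    set k : ℕ := ⌈c⌉₊ with hk
    obtain ⟨g, hgV, hgf⟩ := Set.mem_smul_set.1 (hsub (hfB k))
    have hgV' : pfun z g < 1 := hgV
    have h2 : pfun z (f k) < c := by
      rw [← hgf]
      calc pfun z (c • g) ≤ ‖c‖ * pfun z g := pfun_smul_le z c g
        _ < ‖c‖ * 1 := by
            refine mul_lt_mul_of_pos_left hgV' ?_
            rw [hcn]; linarith
        _ = c := by rw [hcn, mul_one]
    have h3 : ((k:ℝ) + 1) < pterm z k (f k) := by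
      have hpos : (0:ℝ) < 1 / ((k:ℝ) + 1) := by positivity
      have h := mul_lt_mul_of_pos_left (hz k) hpos
      have hk1 : ((k:ℝ) + 1) ≠ 0 := by positivity
      have heq : (1 / ((k:ℝ) + 1)) * ((k:ℝ) + 1) ^ 2 = (k:ℝ) + 1 := by
        field_simp
      calc ((k:ℝ) + 1) = (1 / ((k:ℝ) + 1)) * ((k:ℝ) + 1) ^ 2 := heq.symm
        _ < pterm z k (f k) := h
    have h4 : c ≤ (k:ℝ) := Nat.le_ceil c
    have h5 := pterm_le_pfun z k (f k)
    linarith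
  · rintro ⟨C₀, hC₀⟩
    intro V hV
    obtain ⟨U, hU, hUV⟩ := exists_adm_of_mem_nhds hV
    set C : ℝ := max C₀ 0 with hCdef
    have hC : ∀ f ∈ B, ‖f‖ ≤ C := fun f hf => le_trans (hC₀ f hf) (le_max_left _ _)
    have hC0 : (0:ℝ) ≤ C := le_max_right _ _
    obtain ⟨K, ε, hK, hε, hKU⟩ := tau0_nhds_basis (hU 0).1
    obtain ⟨ρ, hρ⟩ := hK.isBounded.subset_closedBall x₀
    set M : ℝ := max ρ 0 with hMdef
    have hM0 : (0:ℝ) ≤ M := le_max_right _ _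
    have hMb : ∀ x ∈ K, dist x x₀ ≤ M := fun x hx =>
      le_trans (Metric.mem_closedBall.1 (hρ hx)) (le_max_left _ _)
    refine Absorbs.mono_left ?_ hUV
    have hsub0 : U 0 ∩ {f : lip0 X x₀ ℝ | ‖f‖ ≤ 2 ^ 0} ⊆ gammaSet X x₀ ℝ U := by
      intro f hf
      refine Set.mem_iUnion.2 ⟨0, ?_⟩
      rw [Finset.sum_range_one]
      exact hf
    refine Absorbs.mono_left ?_ hsub0
    rw [absorbs_iff_norm]
    refine ⟨max (max C 1) (C * M / ε + 1), fun c hcge => ?_⟩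
    have hc1 : (1:ℝ) ≤ ‖c‖ := le_trans (le_trans (le_max_right C 1) (le_max_left _ _)) hcge
    have hcC : C ≤ ‖c‖ := le_trans (le_trans (le_max_left C 1) (le_max_left _ _)) hcge
    have hcM : C * M / ε + 1 ≤ ‖c‖ := le_trans (le_max_right _ _) hcge
    have hcpos : (0:ℝ) < ‖c‖ := lt_of_lt_of_le one_pos hc1
    have hc0 : c ≠ 0 := by
      intro h
      rw [h, norm_zero] at hc1
      linarith
    intro f hf
    rw [Set.mem_smul_set]
    refine ⟨c⁻¹ • f, ⟨?_, ?_⟩, smul_inv_smul₀ hc0 f⟩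
    · apply hKU
      intro x hx
      show ‖toFun' (c⁻¹ • f) x‖ < ε
      have h1 : toFun' (c⁻¹ • f) x = c⁻¹ * toFun' f x := by
        rw [toFun'_smul, Pi.smul_apply, smul_eq_mul]
      rw [h1, norm_mul, norm_inv]
      have h2 : ‖toFun' f x‖ ≤ C * M := by
        have h3 := norm_sub_le_lipNorm (x₀ := x₀) f x x₀
        rw [apply_base f, sub_zero] at h3
        calc ‖toFun' f x‖ ≤ lipNorm X x₀ ℝ f * dist x x₀ := h3
          _ = ‖f‖ * dist x x₀ := by rw [lip0_norm_def]
          _ ≤ C * M := mul_le_mul (hC f hf) (hMb x hx) dist_nonneg hC0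
      have h4 : C * M / ε < ‖c‖ := lt_of_lt_of_le (lt_add_one _) hcM
      have h5 : C * M < ‖c‖ * ε := (div_lt_iff₀ hε).1 h4
      calc ‖c‖⁻¹ * ‖toFun' f x‖ ≤ ‖c‖⁻¹ * (C * M) :=
            mul_le_mul_of_nonneg_left h2 (inv_nonneg.2 hcpos.le)
        _ < ‖c‖⁻¹ * (‖c‖ * ε) := mul_lt_mul_of_pos_left h5 (inv_pos.2 hcpos)
        _ = ε := by field_simp
    · show ‖c⁻¹ • f‖ ≤ 2 ^ 0
      rw [pow_zero, norm_smul, norm_inv]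
      calc ‖c‖⁻¹ * ‖f‖ ≤ ‖c‖⁻¹ * ‖c‖ :=
            mul_le_mul_of_nonneg_left (le_trans (hC f hf) hcC) (inv_nonneg.2 hcpos.le)
        _ = 1 := inv_mul_cancel₀ hcpos.ne'

end LipApprox
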